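/- Let h(n), n ∈ ℤ, be operators on S = ℂ[h(-1), h(-2), …] where h(n) for n < 0 acts by multiplication, h(n) for n > 0 acts as n ∂/∂h(-n), h(0) acts as 0, and define L(n) = (1/2) ∑_{j∈ℤ} :h(j)h(n-j): (normal ordering puts positive modes to the right; each application to a polynomial has finitely many nonzero terms). Then the L(n) satisfy the Virasoro relations with central charge 1: [L(m), L(n)] = (m-n) L(m+n) + (1/12)(m³ - m) δ_{m+n,0}·id. -/

import Mathlib

open MvPolynomial

/-- The Fock space `S = ℂ[h(-1), h(-2), …]`, realized as polynomials in
countably many variables, where the variable of index `i : ℕ` represents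
`h(-(i+1))`. -/
abbrev FockSpace : Type := MvPolynomial ℕ ℂ

/-- The Heisenberg operators `h(n)` on `S`: for `n < 0`, multiplication by the
variable `h(n)`; for `n > 0`, the operator `n ∂/∂h(-n)`; and `h(0) = 0`.
These satisfy `[h(m), h(n)] = m δ_{m+n,0}` on `S`. -/
noncomputable def heisOp (n : ℤ) : Module.End ℂ FockSpace :=
  if n < 0 then LinearMap.mulLeft ℂ (X (-n - 1).toNat)
  else if 0 < n then (n : ℂ) • (pderiv (n - 1).toNat).toLinearMap
  else 0

/-- The normal-ordered product `:h(j)h(k):`, which puts the positive modes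
(annihilation operators) to the right, i.e. lets them act first. -/
noncomputable def normOrd (j k : ℤ) : Module.End ℂ FockSpace :=
  if j ≤ k then heisOp j * heisOp k else heisOp k * heisOp j

/-- `L(n) = (1/2) ∑_{j∈ℤ} :h(j)h(n-j):` — on each polynomial only finitely many
terms act nonzero, so the sum is a well-defined finite sum (`finsum`). -/
noncomputable def virOp (n : ℤ) : FockSpace → FockSpace :=
  fun p => (2 : ℂ)⁻¹ • ∑ᶠ j : ℤ, normOrd j (n - j) p

theorem heisOp_neg (a : ℤ) (ha : a < 0) (p : FockSpace) :
    heisOp a p = X (-a - 1).toNat * p := by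
  simp [heisOp, ha, LinearMap.mulLeft_apply]

theorem heisOp_pos (a : ℤ) (ha : 0 < a) (p : FockSpace) :
    heisOp a p = (a : ℂ) • pderiv (a - 1).toNat p := by
  simp [heisOp, ha, not_lt.mpr ha.le]

theorem heisOp_zero : heisOp 0 = 0 := by simp [heisOp]

theorem pderiv_comm' {σ R : Type*} [CommRing R] (i j : σ) (p : MvPolynomial σ R) :
    pderiv i (pderiv j p) = pderiv j (pderiv i p) := by
  have hX : ∀ (i j n : σ), pderiv i (pderiv j (X n : MvPolynomial σ R)) = 0 := by
    intro i j n
    classical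
    rw [pderiv_X]
    rcases eq_or_ne j n with h | h
    · subst h; simp [Pi.single_eq_same]
    · simp [Pi.single_eq_of_ne' h]
  induction p using MvPolynomial.induction_on with
  | C a => simp
  | add p q hp hq => simp [hp, hq]
  | mul_X p n ih => simp only [pderiv_mul, map_add, pderiv_mul, ih, hX]; ring

theorem heis_comm (a b : ℤ) (p : FockSpace) :
    heisOp a (heisOp b p) - heisOp b (heisOp a p) = if a + b = 0 then (a : ℂ) • p else 0 := by
  rcases lt_trichotomy a 0 with ha | ha | ha
  · rcases lt_trichotomy b 0 with hb | hb | hb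
    · rw [heisOp_neg a ha, heisOp_neg b hb, heisOp_neg a ha, heisOp_neg b hb,
        if_neg (by omega : ¬ a + b = 0)]
      ring
    · subst hb
      rw [heisOp_zero, if_neg (by omega : ¬ a + 0 = 0)]
      simp
    · -- a < 0 < b
      rw [heisOp_pos b hb p, heisOp_neg a ha, heisOp_neg a ha p, heisOp_pos b hb]
      rw [pderiv_mul]
      by_cases hab : a + b = 0
      · rw [if_pos hab]
        have hAB : (-a - 1).toNat = (b - 1).toNat := by omega
        rw [hAB, pderiv_X_self]
        have hac : (a : ℂ) = -(b : ℂ) := by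
          have : (a : ℤ) = -b := by omega
          rw [this]; push_cast; ring
        rw [hac]
        rw [mul_smul_comm, one_mul]
        module
      · rw [if_neg hab]
        have hAB : (b - 1).toNat ≠ (-a - 1).toNat := by omega
        rw [pderiv_X_of_ne (by omega : (-a-1).toNat ≠ (b-1).toNat)]
        rw [mul_smul_comm]
        simp
  · subst ha
    rw [heisOp_zero]
    simp only [LinearMap.zero_apply, map_zero, sub_zero, zero_sub]
    by_cases hb : (0 : ℤ) + b = 0
    · rw [if_pos hb]; simp
    · rw [if_neg hb]
  · rcases lt_trichotomy b 0 with hb | hb | hb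
    · -- b < 0 < a
      rw [heisOp_neg b hb p, heisOp_pos a ha, heisOp_pos a ha p, heisOp_neg b hb]
      rw [pderiv_mul]
      by_cases hab : a + b = 0
      · rw [if_pos hab]
        have hAB : (-b - 1).toNat = (a - 1).toNat := by omega
        rw [hAB, pderiv_X_self]
        rw [mul_smul_comm, one_mul]
        module
      · rw [if_neg hab]
        rw [pderiv_X_of_ne (by omega : (-b-1).toNat ≠ (a-1).toNat)]
        rw [mul_smul_comm]
        simp
    · subst hb
      rw [heisOp_zero, if_neg (by omega : ¬ a + 0 = 0)]
      simp
    · rw [heisOp_pos b hb p, heisOp_pos a ha, heisOp_pos a ha p, heisOp_pos b hb,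
        if_neg (by omega : ¬ a + b = 0)]
      rw [Derivation.map_smul, Derivation.map_smul, pderiv_comm']
      rw [smul_comm]
      simp

-- vanishing for large positive modes
theorem heisOp_big (p : FockSpace) (j : ℤ) (hj : ((p.vars.sup id : ℕ) : ℤ) + 2 ≤ j) :
    heisOp j p = 0 := by
  have h0 : (0:ℤ) ≤ ((p.vars.sup id : ℕ) : ℤ) := Int.natCast_nonneg _
  rw [heisOp_pos j (by omega)]
  rw [pderiv_eq_zero_of_notMem_vars, smul_zero]
  intro hmem
  have := Finset.le_sup (f := id) hmem
  simp only [id] at this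
  omega

theorem normOrd_apply_zero (j k : ℤ) : normOrd j k (0 : FockSpace) = 0 := by
  unfold normOrd; split <;> simp

/-- The key support lemma: outside a finite interval, `normOrd j (n-j) p = 0`. -/
theorem normOrd_vanish (n : ℤ) (p : FockSpace) (j : ℤ)
    (hj : j ∉ Set.Icc (n - (((p.vars.sup id : ℕ) : ℤ) + 2 + n.natAbs))
      (((p.vars.sup id : ℕ) : ℤ) + 2 + n.natAbs)) :
    normOrd j (n - j) p = 0 := by
  set V : ℤ := ((p.vars.sup id : ℕ) : ℤ) + 2 with hV
  have h0 : (0:ℤ) ≤ ((p.vars.sup id : ℕ) : ℤ) := Int.natCast_nonneg _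
  have hna : (n.natAbs : ℤ) = |n| := Int.abs_eq_natAbs n |>.symm
  rw [Set.mem_Icc, not_and_or] at hj
  rcases hj with hj | hj
  · -- j < n - (V + |n|) : then n - j is large, and j ≤ n - j
    push_neg at hj
    have h1 : heisOp (n - j) p = 0 := heisOp_big p _ (by omega)
    have h2 : j ≤ n - j := by omega
    rw [normOrd, if_pos h2, Module.End.mul_apply, h1, map_zero]
  · -- j large
    push_neg at hj
    have h1 : heisOp j p = 0 := heisOp_big p _ (by omega)
    have h2 : ¬ j ≤ n - j := by omega
    rw [normOrd, if_neg h2, Module.End.mul_apply, h1, map_zero]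

theorem normOrd_support_finite (n : ℤ) (p : FockSpace) :
    (Function.support fun j => normOrd j (n - j) p).Finite := by
  apply Set.Finite.subset (Set.finite_Icc (n - (((p.vars.sup id : ℕ) : ℤ) + 2 + n.natAbs))
    (((p.vars.sup id : ℕ) : ℤ) + 2 + n.natAbs))
  intro j hj
  by_contra hmem
  exact hj (normOrd_vanish n p j hmem)


-- supports of composed maps
theorem support_heis_comp (k n : ℤ) (p : FockSpace) :
    (Function.support fun j => heisOp k (normOrd j (n - j) p)).Finite := by
  apply (normOrd_support_finite n p).subset
  intro j hj
  simp only [Function.mem_support] at hj ⊢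
  intro h; exact hj (by rw [h, map_zero])

theorem virOp_zero (n : ℤ) : virOp n (0 : FockSpace) = 0 := by
  unfold virOp
  have : ∀ j : ℤ, normOrd j (n - j) (0:FockSpace) = 0 := fun j => normOrd_apply_zero _ _
  simp [this]

theorem virOp_add (n : ℤ) (p q : FockSpace) :
    virOp n (p + q) = virOp n p + virOp n q := by
  unfold virOp
  rw [← smul_add, ← finsum_add_distrib (normOrd_support_finite n p) (normOrd_support_finite n q)]
  congr 1
  exact finsum_congr fun j => map_add _ _ _

theorem virOp_smul (n : ℤ) (c : ℂ) (p : FockSpace) :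
    virOp n (c • p) = c • virOp n p := by
  unfold virOp
  rw [smul_comm]
  congr 1
  rw [smul_finsum]
  exact finsum_congr fun j => map_smul _ _ _

theorem virOp_sub (n : ℤ) (p q : FockSpace) :
    virOp n (p - q) = virOp n p - virOp n q := by
  have := virOp_add n (p - q) q
  rw [sub_add_cancel] at this
  rw [this]; abel

/-- virOp as an additive monoid hom, for `map_finsum`. -/
noncomputable def virHom (n : ℤ) : FockSpace →+ FockSpace :=
  AddMonoidHom.mk' (virOp n) (virOp_add n)

theorem support_vir_comp (m n : ℤ) (p : FockSpace) :
    (Function.support fun j => virOp m (normOrd j (n - j) p)).Finite := by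
  apply (normOrd_support_finite n p).subset
  intro j hj
  simp only [Function.mem_support] at hj ⊢
  intro h; exact hj (by rw [h, virOp_zero])

/-- Pointwise commutator of `h(k)` with a normal ordered pair. -/
theorem heis_normOrd_comm (k j l : ℤ) (p : FockSpace) :
    heisOp k (normOrd j l p) - normOrd j l (heisOp k p)
      = (if j = -k then (k:ℂ) • heisOp l p else 0)
        + (if l = -k then (k:ℂ) • heisOp j p else 0) := by
  have key : ∀ a b : ℤ,
      heisOp k (heisOp a (heisOp b p)) - heisOp a (heisOp b (heisOp k p))
        = (if a = -k then (k:ℂ) • heisOp b p else 0)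
          + (if b = -k then (k:ℂ) • heisOp a p else 0) := by
    intro a b
    have e1 := heis_comm k a (heisOp b p)
    have e2 := heis_comm k b p
    have split : heisOp k (heisOp a (heisOp b p)) - heisOp a (heisOp b (heisOp k p))
        = (heisOp k (heisOp a (heisOp b p)) - heisOp a (heisOp k (heisOp b p)))
          + heisOp a (heisOp k (heisOp b p) - heisOp b (heisOp k p)) := by
      rw [map_sub]; abel
    rw [split, e1, e2]
    congr 1
    · have hiff : (k + a = 0) ↔ (a = -k) := by omega
      simp only [hiff]
    · by_cases h : k + b = 0
      · rw [if_pos h, if_pos (by omega : b = -k), map_smul]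
      · rw [if_neg h, if_neg (by omega : ¬ b = -k), map_zero]
  by_cases h : j ≤ l
  · have hn : normOrd j l = heisOp j * heisOp l := by rw [normOrd, if_pos h]
    rw [hn]
    simpa [Module.End.mul_apply] using key j l
  · have hn : normOrd j l = heisOp l * heisOp j := by rw [normOrd, if_neg h]
    rw [hn]
    have hk := key l j
    simp only [Module.End.mul_apply] at hk ⊢
    rw [hk]
    abel

/-- `[h(k), L(n)] = k h(k+n)` pointwise. -/
theorem heis_vir_comm (k n : ℤ) (p : FockSpace) :
    heisOp k (virOp n p) - virOp n (heisOp k p) = (k : ℂ) • heisOp (k + n) p := by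
  unfold virOp
  rw [map_smul, ← smul_sub]
  have hmap : heisOp k (∑ᶠ j : ℤ, normOrd j (n - j) p)
      = ∑ᶠ j : ℤ, heisOp k (normOrd j (n - j) p) :=
    (heisOp k).toAddMonoidHom.map_finsum (normOrd_support_finite n p)
  rw [hmap, ← finsum_sub_distrib (support_heis_comp k n p)
      (normOrd_support_finite n (heisOp k p))]
  have hpt : ∀ j : ℤ, heisOp k (normOrd j (n - j) p) - normOrd j (n - j) (heisOp k p)
      = (if j = -k then (k:ℂ) • heisOp (n - j) p else 0)
        + (if j = n + k then (k:ℂ) • heisOp j p else 0) := by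
    intro j
    rw [heis_normOrd_comm k j (n - j) p]
    congr 1
    have hiff : (n - j = -k) ↔ (j = n + k) := by omega
    simp only [hiff]
  rw [finsum_congr hpt]
  have hs1 : (Function.support fun j : ℤ =>
      (if j = -k then (k:ℂ) • heisOp (n - j) p else 0)).Finite := by
    apply (Set.finite_singleton (-k)).subset
    intro j hj
    simp only [Function.mem_support] at hj
    by_contra hne
    simp only [Set.mem_singleton_iff] at hne
    exact hj (if_neg hne)
  have hs2 : (Function.support fun j : ℤ =>
      (if j = n + k then (k:ℂ) • heisOp j p else 0)).Finite := by
    apply (Set.finite_singleton (n + k)).subset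
    intro j hj
    simp only [Function.mem_support] at hj
    by_contra hne
    simp only [Set.mem_singleton_iff] at hne
    exact hj (if_neg hne)
  rw [finsum_add_distrib hs1 hs2]
  rw [finsum_eq_single _ (-k) (fun x hx => if_neg hx),
      finsum_eq_single _ (n + k) (fun x hx => if_neg hx)]
  rw [if_pos rfl, if_pos rfl]
  have h1 : n - -k = k + n := by ring
  have h2 : n + k = k + n := by ring
  rw [h1, h2, ← add_smul, smul_smul]
  congr 1
  ring

/-- Reordering: `h(a)h(b) = :h(a)h(b): + a δ_{a+b,0}[b<a]`. -/
theorem heis_mul_eq (a b : ℤ) (p : FockSpace) :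
    heisOp a (heisOp b p)
      = normOrd a b p + (if a + b = 0 ∧ b < a then (a:ℂ) • p else 0) := by
  by_cases h : a ≤ b
  · have hn : normOrd a b = heisOp a * heisOp b := by rw [normOrd, if_pos h]
    rw [hn, if_neg (by omega : ¬ (a + b = 0 ∧ b < a)), Module.End.mul_apply, add_zero]
  · have hn : normOrd a b = heisOp b * heisOp a := by rw [normOrd, if_neg h]
    have hc := heis_comm a b p
    rw [hn, Module.End.mul_apply]
    by_cases hab : a + b = 0
    · rw [if_pos hab] at hc
      rw [if_pos (by omega : a + b = 0 ∧ b < a)]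
      linear_combination (norm := module) hc
    · rw [if_neg hab] at hc
      rw [if_neg (by omega : ¬ (a + b = 0 ∧ b < a)), add_zero]
      linear_combination (norm := module) hc

/-- `[L(m), h(j)h(k)]` and hence `[L(m), :h(j)h(k):]` pointwise. -/
theorem vir_normOrd_comm (m j k : ℤ) (p : FockSpace) :
    virOp m (normOrd j k p) - normOrd j k (virOp m p)
      = -((j:ℂ) • heisOp (j + m) (heisOp k p))
        - (k:ℂ) • heisOp j (heisOp (k + m) p) := by
  have hprod : virOp m (heisOp j (heisOp k p)) - heisOp j (heisOp k (virOp m p))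
      = -((j:ℂ) • heisOp (j + m) (heisOp k p))
        - (k:ℂ) • heisOp j (heisOp (k + m) p) := by
    have e1 := heis_vir_comm j m (heisOp k p)
    have e2 := heis_vir_comm k m p
    have split : virOp m (heisOp j (heisOp k p)) - heisOp j (heisOp k (virOp m p))
        = -(heisOp j (virOp m (heisOp k p)) - virOp m (heisOp j (heisOp k p)))
          - heisOp j (heisOp k (virOp m p) - virOp m (heisOp k p)) := by
      rw [map_sub]; abel
    rw [split]
    have e1' : heisOp j (virOp m (heisOp k p)) - virOp m (heisOp j (heisOp k p))
        = (j:ℂ) • heisOp (j + m) (heisOp k p) := e1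
    rw [e1']
    have e2' : heisOp k (virOp m p) - virOp m (heisOp k p) = (k:ℂ) • heisOp (k + m) p := e2
    have : heisOp j (heisOp k (virOp m p) - virOp m (heisOp k p))
        = (k:ℂ) • heisOp j (heisOp (k + m) p) := by rw [e2', map_smul]
    rw [this]
  have hre := heis_mul_eq j k
  set d : ℂ := if j + k = 0 ∧ k < j then (j:ℂ) else 0 with hd
  have hdp : ∀ q : FockSpace, (if j + k = 0 ∧ k < j then (j:ℂ) • q else 0) = d • q := by
    intro q; rw [hd]; split_ifs <;> simp
  have h1 : virOp m (normOrd j k p) = virOp m (heisOp j (heisOp k p)) - d • virOp m p := by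
    have : normOrd j k p = heisOp j (heisOp k p) - d • p := by rw [hre p, hdp p]; abel
    rw [this, virOp_sub, virOp_smul]
  have h2 : normOrd j k (virOp m p) = heisOp j (heisOp k (virOp m p)) - d • virOp m p := by
    have := hre (virOp m p)
    rw [this, hdp (virOp m p)]; abel
  rw [h1, h2, ← hprod]
  abel

theorem sum_range_cast (M : ℕ) :
    ∑ i ∈ Finset.range M, (i:ℂ) = (M:ℂ)*((M:ℂ)-1)/2 := by
  induction M with
  | zero => simp
  | succ M ih => rw [Finset.sum_range_succ, ih]; push_cast; ring

theorem sum_range_sq_cast (M : ℕ) :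
    ∑ i ∈ Finset.range M, (i:ℂ)^2 = (M:ℂ)*((M:ℂ)-1)*(2*(M:ℂ)-1)/6 := by
  induction M with
  | zero => simp
  | succ M ih => rw [Finset.sum_range_succ, ih]; push_cast; ring

/-- The central-charge sum. -/
theorem central_sum (m : ℤ) :
    ∑ᶠ j : ℤ, ((if 0 < j then (j:ℂ)*((m:ℂ)+(j:ℂ)) else 0)
      - (if -m < j then (j:ℂ)*((m:ℂ)+(j:ℂ)) else 0)) = ((m:ℂ)^3 - (m:ℂ))/6 := by
  set F : ℤ → ℂ := fun j => ((if 0 < j then (j:ℂ)*((m:ℂ)+(j:ℂ)) else 0)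
      - (if -m < j then (j:ℂ)*((m:ℂ)+(j:ℂ)) else 0)) with hF
  rcases lt_trichotomy m 0 with hm | hm | hm
  · -- m < 0 : support in Ioc 0 (-m), F j = j(m+j) there
    have hsub : Function.support F ⊆ ↑(Finset.Ioc (0:ℤ) (-m)) := by
      intro j hj
      simp only [Function.mem_support, hF] at hj
      simp only [Finset.coe_Ioc, Set.mem_Ioc]
      by_contra hc
      push_neg at hc
      apply hj
      have : (0 < j) ↔ (-m < j) := by
        constructor
        · intro h; omega
        · intro h; omega
      rw [if_congr this rfl rfl]
      exact sub_self _
    rw [finsum_eq_sum_of_support_subset F hsub]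
    have hval : ∀ j ∈ Finset.Ioc (0:ℤ) (-m), F j
        = (fun i : ℕ => ((i:ℂ)+1)*((m:ℂ)+(i:ℂ)+1)) ((j-1).toNat) := by
      intro j hj
      simp only [Finset.mem_Ioc] at hj
      have h1 : (0:ℤ) < j := hj.1
      have hcast : (((j-1).toNat : ℕ) : ℂ) = (j:ℂ) - 1 := by
        have : (((j-1).toNat : ℕ) : ℤ) = j - 1 := Int.toNat_of_nonneg (by omega)
        calc (((j-1).toNat : ℕ) : ℂ) = (((j-1).toNat : ℤ) : ℂ) := by push_cast; ring
          _ = ((j - 1 : ℤ) : ℂ) := by rw [this]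
          _ = (j:ℂ) - 1 := by push_cast; ring
      simp only [hF, if_pos h1, if_neg (by omega : ¬ (-m < j)), sub_zero, hcast]
      ring
    have hbij : ∑ j ∈ Finset.Ioc (0:ℤ) (-m), F j
        = ∑ i ∈ Finset.range (-m).toNat, ((i:ℂ)+1)*((m:ℂ)+(i:ℂ)+1) := by
      refine Finset.sum_bij' (fun j _ => (j-1).toNat) (fun i _ => (i:ℤ)+1) ?_ ?_ ?_ ?_ ?_
      · intro a ha; simp only [Finset.mem_Ioc] at ha; simp only [Finset.mem_range]; omega
      · intro a ha; simp only [Finset.mem_range] at ha; simp only [Finset.mem_Ioc]; omega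
      · intro a ha; simp only [Finset.mem_Ioc] at ha; omega
      · intro a ha; simp only [Finset.mem_range] at ha; omega
      · intro a ha; exact hval a ha
    rw [hbij]
    -- now evaluate the sum over range
    set M : ℕ := (-m).toNat with hM
    have hmM : (m:ℂ) = -(M:ℂ) := by
      have : ((M:ℕ):ℤ) = -m := Int.toNat_of_nonneg (by omega)
      calc (m:ℂ) = -(((-m):ℤ):ℂ) := by push_cast; ring
        _ = -(((M:ℕ):ℤ):ℂ) := by rw [this]
        _ = -(M:ℂ) := by push_cast; ring
    have expand : ∀ i ∈ Finset.range M, ((i:ℂ)+1)*((m:ℂ)+(i:ℂ)+1)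
        = (i:ℂ)^2 + ((m:ℂ)+2)*(i:ℂ) + ((m:ℂ)+1) := by intro i _; ring
    rw [Finset.sum_congr rfl expand]
    rw [Finset.sum_add_distrib, Finset.sum_add_distrib, ← Finset.mul_sum,
      sum_range_sq_cast, sum_range_cast, Finset.sum_const, Finset.card_range]
    rw [hmM]
    push_cast
    ring
  · subst hm; simp [hF]
  · -- 0 < m : support in Ioc (-m) 0, F j = -(j(m+j)) there
    have hsub : Function.support F ⊆ ↑(Finset.Ioc (-m) (0:ℤ)) := by
      intro j hj
      simp only [Function.mem_support, hF] at hj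
      simp only [Finset.coe_Ioc, Set.mem_Ioc]
      by_contra hc
      push_neg at hc
      apply hj
      have : (0 < j) ↔ (-m < j) := by
        constructor
        · intro h; omega
        · intro h; omega
      rw [if_congr this rfl rfl]
      exact sub_self _
    rw [finsum_eq_sum_of_support_subset F hsub]
    have hval : ∀ j ∈ Finset.Ioc (-m) (0:ℤ), F j
        = (fun i : ℕ => ((i:ℂ))*((m:ℂ)-(i:ℂ))) ((-j).toNat) := by
      intro j hj
      simp only [Finset.mem_Ioc] at hj
      have hcast : (((-j).toNat : ℕ) : ℂ) = -(j:ℂ) := by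
        have : (((-j).toNat : ℕ) : ℤ) = -j := Int.toNat_of_nonneg (by omega)
        calc (((-j).toNat : ℕ) : ℂ) = (((-j).toNat : ℤ) : ℂ) := by push_cast; ring
          _ = ((-j : ℤ) : ℂ) := by rw [this]
          _ = -(j:ℂ) := by push_cast; ring
      simp only [hF, if_neg (by omega : ¬ (0 < j)), if_pos (by omega : -m < j), zero_sub, hcast]
      ring
    have hbij : ∑ j ∈ Finset.Ioc (-m) (0:ℤ), F j
        = ∑ i ∈ Finset.range m.toNat, ((i:ℂ))*((m:ℂ)-(i:ℂ)) := by
      refine Finset.sum_bij' (fun j _ => (-j).toNat) (fun i _ => -(i:ℤ)) ?_ ?_ ?_ ?_ ?_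
      · intro a ha; simp only [Finset.mem_Ioc] at ha; simp only [Finset.mem_range]; omega
      · intro a ha; simp only [Finset.mem_range] at ha; simp only [Finset.mem_Ioc]; omega
      · intro a ha; simp only [Finset.mem_Ioc] at ha; omega
      · intro a ha; simp only [Finset.mem_range] at ha; omega
      · intro a ha; exact hval a ha
    rw [hbij]
    set M : ℕ := m.toNat with hM
    have hmM : (m:ℂ) = (M:ℂ) := by
      have : ((M:ℕ):ℤ) = m := Int.toNat_of_nonneg (by omega)
      calc (m:ℂ) = (((m:ℤ)):ℂ) := rfl
        _ = (((M:ℕ):ℤ):ℂ) := by rw [this]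
        _ = (M:ℂ) := by push_cast; ring
    have expand : ∀ i ∈ Finset.range M, ((i:ℂ))*((m:ℂ)-(i:ℂ))
        = (m:ℂ)*(i:ℂ) - (i:ℂ)^2 := by intro i _; ring
    rw [Finset.sum_congr rfl expand]
    rw [Finset.sum_sub_distrib, ← Finset.mul_sum, sum_range_sq_cast, sum_range_cast]
    rw [hmM]
    ring

/-- Pointwise decomposition of `[L(m), :h(j)h(n-j):] p` into normal-ordered
terms plus central corrections. -/
theorem G_pointwise (m n j : ℤ) (p : FockSpace) :
    virOp m (normOrd j (n - j) p) - normOrd j (n - j) (virOp m p)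
      = ((m:ℂ) - ((j:ℂ) + (m:ℂ))) • normOrd (j+m) ((m+n)-(j+m)) p
        + (-(n:ℂ) + (j:ℂ)) • normOrd j ((m+n)-j) p
        + ((-(j:ℂ)) * (if m + n = 0 ∧ n - j < j + m then ((j:ℂ)+(m:ℂ)) else 0)
           + (-(n:ℂ)+(j:ℂ)) * (if m + n = 0 ∧ (n-j)+m < j then (j:ℂ) else 0)) • p := by
  rw [vir_normOrd_comm m j (n - j) p]
  rw [heis_mul_eq (j+m) (n-j) p, heis_mul_eq j ((n-j)+m) p]
  have harg1 : (m+n)-(j+m) = n - j := by ring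
  have harg2 : (m+n)-j = (n-j)+m := by ring
  rw [harg1, harg2]
  have hiff1 : ((j+m) + (n-j) = 0 ∧ (n-j) < (j+m)) ↔ (m + n = 0 ∧ n - j < j + m) := by omega
  have hiff2 : (j + ((n-j)+m) = 0 ∧ (n-j)+m < j) ↔ (m + n = 0 ∧ (n-j)+m < j) := by omega
  simp only [hiff1, hiff2]
  have hsc1 : (if m + n = 0 ∧ n - j < j + m then (((j+m):ℤ):ℂ) • p else 0)
      = (if m + n = 0 ∧ n - j < j + m then ((j:ℂ)+(m:ℂ)) else 0) • p := by
    split_ifs <;> [skip; simp]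
    push_cast; ring_nf
  have hsc2 : (if m + n = 0 ∧ (n-j)+m < j then ((j:ℤ):ℂ) • p else 0)
      = (if m + n = 0 ∧ (n-j)+m < j then ((j:ℤ):ℂ) else 0) • p := by
    split_ifs <;> simp
  rw [hsc1, hsc2]
  push_cast
  module

/-- The operators `L(n) = (1/2) ∑_{j∈ℤ} :h(j)h(n-j):` on
`S = ℂ[h(-1), h(-2), …]` satisfy the Virasoro relations with central charge 1:
`[L(m), L(n)] = (m-n) L(m+n) + (1/12)(m³ - m) δ_{m+n,0} · id`. -/
theorem virasoro_commutator (m n : ℤ) (p : FockSpace) :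
    virOp m (virOp n p) - virOp n (virOp m p)
      = ((m : ℂ) - (n : ℂ)) • virOp (m + n) p
        + (if m + n = 0 then (((m : ℂ) ^ 3 - (m : ℂ)) / 12) • p else 0) := by
  classical
  set N : ℤ → FockSpace := fun i => normOrd i ((m+n) - i) p with hN
  have hNfin : (Function.support N).Finite := normOrd_support_finite (m+n) p
  set w : ℤ → ℂ := fun j =>
      (-(j:ℂ)) * (if m + n = 0 ∧ n - j < j + m then ((j:ℂ)+(m:ℂ)) else 0)
        + (-(n:ℂ)+(j:ℂ)) * (if m + n = 0 ∧ (n-j)+m < j then (j:ℂ) else 0) with hw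
  -- Step 1 : LHS = 2⁻¹ • ∑ᶠ j, G j
  have step1 : virOp m (virOp n p) - virOp n (virOp m p)
      = (2:ℂ)⁻¹ • ∑ᶠ j : ℤ, (virOp m (normOrd j (n - j) p)
          - normOrd j (n - j) (virOp m p)) := by
    have h1 : virOp m (virOp n p)
        = (2:ℂ)⁻¹ • ∑ᶠ j : ℤ, virOp m (normOrd j (n - j) p) := by
      show virOp m ((2:ℂ)⁻¹ • ∑ᶠ j : ℤ, normOrd j (n - j) p) = _
      rw [virOp_smul]
      congr 1
      exact (virHom m).map_finsum (normOrd_support_finite n p)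
    have h2 : virOp n (virOp m p)
        = (2:ℂ)⁻¹ • ∑ᶠ j : ℤ, normOrd j (n - j) (virOp m p) := rfl
    rw [h1, h2, ← smul_sub,
      ← finsum_sub_distrib (support_vir_comp m n p)
        (normOrd_support_finite n (virOp m p))]
  rw [step1]
  -- Step 2 : pointwise decomposition
  have step2 : ∀ j : ℤ, virOp m (normOrd j (n - j) p) - normOrd j (n - j) (virOp m p)
      = ((m:ℂ) - ((j:ℂ) + (m:ℂ))) • N (j+m) + (-(n:ℂ) + (j:ℂ)) • N j + w j • p := by
    intro j
    rw [G_pointwise m n j p]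
  rw [finsum_congr step2]
  -- finiteness of the three pieces
  have hfin1 : (Function.support fun j : ℤ =>
      ((m:ℂ) - ((j:ℂ) + (m:ℂ))) • N (j+m)).Finite := by
    have hsub : (Function.support fun j : ℤ => ((m:ℂ) - ((j:ℂ) + (m:ℂ))) • N (j+m))
        ⊆ (fun j : ℤ => j + m) ⁻¹' Function.support N := by
      intro j hj
      simp only [Function.mem_support] at hj
      simp only [Set.mem_preimage, Function.mem_support]
      intro h; exact hj (by rw [h, smul_zero])
    exact (hNfin.preimage (fun a _ b _ hab => by omega)).subset hsub
  have hfin2 : (Function.support fun j : ℤ => (-(n:ℂ) + (j:ℂ)) • N j).Finite := by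
    apply hNfin.subset
    intro j hj
    simp only [Function.mem_support] at hj ⊢
    intro h; exact hj (by rw [h, smul_zero])
  have hwfin : (Function.support w).Finite := by
    apply (Set.finite_Icc (-(m.natAbs : ℤ)) (m.natAbs : ℤ)).subset
    intro j hj
    simp only [Function.mem_support, hw] at hj
    simp only [Set.mem_Icc]
    by_contra hc
    push_neg at hc
    apply hj
    by_cases hmn : m + n = 0
    · have e1 : (m + n = 0 ∧ n - j < j + m) ↔ (m + n = 0 ∧ (n-j)+m < j) := by omega
      rw [if_congr e1 rfl rfl]
      split_ifs with h
      · have hnm : (m:ℂ) + (n:ℂ) = 0 := by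
          have h0 : ((m + n : ℤ) : ℂ) = ((0:ℤ):ℂ) := by rw [hmn]
          push_cast at h0; exact h0
        linear_combination (-(j:ℂ)) * hnm
      · ring
    · rw [if_neg (by tauto), if_neg (by tauto)]; ring
  have hfin3 : (Function.support fun j : ℤ => w j • p).Finite := by
    apply hwfin.subset
    intro j hj
    simp only [Function.mem_support] at hj ⊢
    intro h; exact hj (by rw [h, zero_smul])
  have hfin12 : (Function.support fun j : ℤ =>
      ((m:ℂ) - ((j:ℂ) + (m:ℂ))) • N (j+m) + (-(n:ℂ) + (j:ℂ)) • N j).Finite := by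
    apply (hfin1.union hfin2).subset
    intro j hj
    simp only [Function.mem_support] at hj
    by_contra hc
    simp only [Set.mem_union, Function.mem_support, not_or, not_not] at hc
    exact hj (by rw [hc.1, hc.2, add_zero])
  rw [finsum_add_distrib hfin12 hfin3, finsum_add_distrib hfin1 hfin2]
  -- reindex the first sum
  have hS1 : ∑ᶠ j : ℤ, ((m:ℂ) - ((j:ℂ)+(m:ℂ))) • N (j+m)
      = ∑ᶠ i : ℤ, ((m:ℂ) - (i:ℂ)) • N i := by
    have hfn : (fun j : ℤ => ((m:ℂ) - ((j:ℂ)+(m:ℂ))) • N (j+m))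
        = fun j : ℤ => (fun i : ℤ => ((m:ℂ) - (i:ℂ)) • N i) ((Equiv.addRight m) j) := by
      funext j
      simp only [Equiv.coe_addRight]
      congr 1
      push_cast
      ring
    rw [hfn]
    exact finsum_comp_equiv (Equiv.addRight m) (f := fun i : ℤ => ((m:ℂ) - (i:ℂ)) • N i)
  rw [hS1]
  -- combine the two normal-ordered sums
  have hfa : (Function.support fun i : ℤ => ((m:ℂ) - (i:ℂ)) • N i).Finite := by
    apply hNfin.subset
    intro j hj
    simp only [Function.mem_support] at hj ⊢
    intro h; exact hj (by rw [h, smul_zero])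
  have hcomb : (∑ᶠ i : ℤ, ((m:ℂ) - (i:ℂ)) • N i) + ∑ᶠ j : ℤ, (-(n:ℂ)+(j:ℂ)) • N j
      = ((m:ℂ) - (n:ℂ)) • ((2:ℂ) • virOp (m+n) p) := by
    rw [← finsum_add_distrib hfa hfin2]
    have hpt : ∀ i : ℤ, ((m:ℂ) - (i:ℂ)) • N i + (-(n:ℂ)+(i:ℂ)) • N i
        = ((m:ℂ)-(n:ℂ)) • N i := by
      intro i
      rw [← add_smul]
      congr 1
      ring
    rw [finsum_congr hpt]
    have h2v : ∑ᶠ i : ℤ, N i = (2:ℂ) • virOp (m+n) p := by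
      show _ = (2:ℂ) • ((2:ℂ)⁻¹ • ∑ᶠ i : ℤ, normOrd i ((m+n) - i) p)
      rw [smul_smul]
      norm_num
      rfl
    rw [← smul_finsum, h2v]
  rw [hcomb]
  -- the central sum
  have hS3 : ∑ᶠ j : ℤ, w j • p = (∑ᶠ j : ℤ, w j) • p := (finsum_smul' hwfin p).symm
  rw [hS3]
  have hcent : ∑ᶠ j : ℤ, w j = if m + n = 0 then ((m:ℂ)^3 - (m:ℂ))/6 else 0 := by
    by_cases hmn : m + n = 0
    · rw [if_pos hmn]
      have hptw : ∀ j : ℤ, w j = (if 0 < j then (j:ℂ)*((m:ℂ)+(j:ℂ)) else 0)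
          - (if -m < j then (j:ℂ)*((m:ℂ)+(j:ℂ)) else 0) := by
        intro j
        simp only [hw]
        have c1 : (m + n = 0 ∧ n - j < j + m) ↔ (-m < j) := by omega
        have c2 : (m + n = 0 ∧ (n-j)+m < j) ↔ (0 < j) := by omega
        rw [if_congr c1 rfl rfl, if_congr c2 rfl rfl]
        have hnm : (n:ℂ) = -(m:ℂ) := by
          have h0 : ((n : ℤ) : ℂ) = ((-m:ℤ):ℂ) := by rw [show n = -m by omega]
          push_cast at h0
          exact h0
        rw [hnm]
        split_ifs <;> ring
      rw [finsum_congr hptw, central_sum m]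
    · rw [if_neg hmn]
      have hptw : ∀ j : ℤ, w j = 0 := by
        intro j
        simp only [hw]
        rw [if_neg (by tauto), if_neg (by tauto)]
        ring
      rw [finsum_congr hptw, finsum_zero]
  rw [hcent]
  by_cases hmn : m + n = 0
  · rw [if_pos hmn, if_pos hmn]
    rw [smul_add]
    rw [smul_smul, smul_smul, smul_smul]
    match_scalars <;> ring
  · rw [if_neg hmn, if_neg hmn]
    rw [smul_add]
    rw [smul_smul, smul_smul]
    match_scalars <;> ring
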